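/- Fix c ∈ (0,1), points x₁ ≠ x₂ in R^D, and let x̂ lie on the segment from x₁ to x₂ with d₁ = ‖x̂ − x₁‖ ≤ d₂ = ‖x̂ − x₂‖ and d₁ + d₂ = ‖x₁ − x₂‖. Suppose x̂ is memorised: d₁² ≤ c·d₂². Then there exists a displacement δ along the segment toward x₂ making x̂' = x̂ + δ not memorised (i.e. d₁'² > c·d₂'² and d₂'² > c·d₁'² for d₁' = d₁ + ‖δ‖, d₂' = d₂ − ‖δ‖) if and only if the interval ((√c·d₂ − d₁)/(1+√c), (d₂ − √c·d₁)/(1+√c)) is nonempty and intersects (0, d₂), which holds whenever d₁ < d₂ (strict). -/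
import Mathlib

lemma stmt16_aux (c r d₁ d₂ s : ℝ) (hrc : r ^ 2 = c) (hr0 : 0 < r)
    (hd1 : 0 ≤ d₁) (hs0 : 0 < s) (hsd : s < d₂)
    (ha : (r * d₂ - d₁) / (1 + r) < s) (hb : s < (d₂ - r * d₁) / (1 + r)) :
    (d₁ + s) ^ 2 > c * (d₂ - s) ^ 2 ∧ (d₂ - s) ^ 2 > c * (d₁ + s) ^ 2 := by
  have h1r : (0:ℝ) < 1 + r := by linarith
  rw [div_lt_iff₀ h1r] at ha
  rw [lt_div_iff₀ h1r] at hb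
  subst hrc
  constructor
  · nlinarith [mul_pos (show 0 < d₁ + s - r * (d₂ - s) by nlinarith)
      (show 0 < d₁ + s + r * (d₂ - s) by nlinarith)]
  · nlinarith [mul_pos (show 0 < d₂ - s - r * (d₁ + s) by nlinarith)
      (show 0 < d₂ - s + r * (d₁ + s) by nlinarith)]

/-- Existence version of the margin theorem: for a memorised point x̂ on the
segment from x₁ to x₂ (distances d₁ ≤ d₂), a displacement of length s toward
x₂ de-memorises x̂ iff the open interval
((√c·d₂ − d₁)/(1+√c), (d₂ − √c·d₁)/(1+√c)) is nonempty and meets (0, d₂);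
this holds whenever d₁ < d₂. -/
theorem stmt16 {D : ℕ} (c : ℝ) (hc : c ∈ Set.Ioo (0:ℝ) 1)
    (x₁ x₂ xhat : EuclideanSpace ℝ (Fin D)) (hne : x₁ ≠ x₂)
    (hseg : xhat ∈ segment ℝ x₁ x₂)
    (d₁ d₂ : ℝ) (hd₁ : d₁ = ‖xhat - x₁‖) (hd₂ : d₂ = ‖xhat - x₂‖)
    (hle : d₁ ≤ d₂) (hsum : d₁ + d₂ = ‖x₁ - x₂‖)
    (hmem : d₁ ^ 2 ≤ c * d₂ ^ 2) :
    ((∃ s : ℝ, 0 < s ∧ s < d₂ ∧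
        (d₁ + s) ^ 2 > c * (d₂ - s) ^ 2 ∧ (d₂ - s) ^ 2 > c * (d₁ + s) ^ 2) ↔
      ((Real.sqrt c * d₂ - d₁) / (1 + Real.sqrt c) <
          (d₂ - Real.sqrt c * d₁) / (1 + Real.sqrt c) ∧
        (Set.Ioo ((Real.sqrt c * d₂ - d₁) / (1 + Real.sqrt c))
              ((d₂ - Real.sqrt c * d₁) / (1 + Real.sqrt c)) ∩
            Set.Ioo (0:ℝ) d₂).Nonempty)) ∧
    (d₁ < d₂ →
      ∃ s : ℝ, 0 < s ∧ s < d₂ ∧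
        (d₁ + s) ^ 2 > c * (d₂ - s) ^ 2 ∧ (d₂ - s) ^ 2 > c * (d₁ + s) ^ 2) := by
  have hd1n : 0 ≤ d₁ := hd₁ ▸ norm_nonneg _
  have hd2n : 0 ≤ d₂ := hd₂ ▸ norm_nonneg _
  set r := Real.sqrt c with hrdef
  have hrc : r ^ 2 = c := Real.sq_sqrt hc.1.le
  have hr0 : 0 < r := Real.sqrt_pos.mpr hc.1
  have hr1 : r < 1 := by
    nlinarith [hc.2]
  have h1r : (0:ℝ) < 1 + r := by linarith
  constructor
  · constructor
    · rintro ⟨s, hs0, hsd, h1, h2⟩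
      have hds : 0 < d₂ - s := by linarith
      have hA : r * (d₂ - s) < d₁ + s := by
        have h : (r * (d₂ - s)) ^ 2 < (d₁ + s) ^ 2 := by nlinarith
        exact lt_of_pow_lt_pow_left₀ 2 (by positivity) h
      have hB : r * (d₁ + s) < d₂ - s := by
        have h : (r * (d₁ + s)) ^ 2 < (d₂ - s) ^ 2 := by nlinarith
        exact lt_of_pow_lt_pow_left₀ 2 (by linarith) h
      have ha : (r * d₂ - d₁) / (1 + r) < s := by
        rw [div_lt_iff₀ h1r]; nlinarith
      have hb : s < (d₂ - r * d₁) / (1 + r) := by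
        rw [lt_div_iff₀ h1r]; nlinarith
      exact ⟨lt_trans ha hb, ⟨s, ⟨ha, hb⟩, hs0, hsd⟩⟩
    · rintro ⟨hab, s, ⟨ha, hb⟩, hs0, hsd⟩
      obtain ⟨g1, g2⟩ := stmt16_aux c r d₁ d₂ s hrc hr0 hd1n hs0 hsd ha hb
      exact ⟨s, hs0, hsd, g1, g2⟩
  · intro hlt
    have hd2p : 0 < d₂ := lt_of_le_of_lt hd1n hlt
    set a := max ((r * d₂ - d₁) / (1 + r)) 0 with hadef
    set b := min ((d₂ - r * d₁) / (1 + r)) d₂ with hbdef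
    have hab : a < b := by
      apply max_lt <;> apply lt_min
      · rw [div_lt_div_iff₀ h1r h1r]
        nlinarith [mul_pos (mul_pos h1r (sub_pos.mpr hr1)) (show (0:ℝ) < d₁ + d₂ by linarith)]
      · rw [div_lt_iff₀ h1r]; nlinarith
      · rw [lt_div_iff₀ h1r]; nlinarith
      · exact hd2p
    set s := (a + b) / 2 with hsdef
    have has : a < s := by simp only [hsdef]; linarith
    have hsb : s < b := by simp only [hsdef]; linarith
    have hs0 : 0 < s := lt_of_le_of_lt (le_max_right _ _) has
    have hsd : s < d₂ := lt_of_lt_of_le hsb (min_le_right _ _)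
    have ha : (r * d₂ - d₁) / (1 + r) < s := lt_of_le_of_lt (le_max_left _ _) has
    have hb : s < (d₂ - r * d₁) / (1 + r) := lt_of_lt_of_le hsb (min_le_left _ _)
    obtain ⟨g1, g2⟩ := stmt16_aux c r d₁ d₂ s hrc hr0 hd1n hs0 hsd ha hb
    exact ⟨s, hs0, hsd, g1, g2⟩
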